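/- There exists a universal constant C > 0 such that for every Borel function α : ℝ₊ → [0,1], every x ∈ ℝ, every t ≥ 0 and every ε ≥ 0, the solution X^α of the ISBM equation satisfies E^x |X^α_{t+ε} − X^α_t|^4 ≤ C ε². -/

import Mathlib

open MeasureTheory ProbabilityTheory Filter Set

noncomputable section

namespace ISBM

variable {Ω : Type*}

/-- The symmetric sign function, with `sgn 0 = 0`. -/
def sgn (x : ℝ) : ℝ := if 0 < x then 1 else if x < 0 then -1 else 0

/-- `B` is a standard Brownian motion started at `0` under `μ`:
measurable, a.s. continuous paths starting from `0`, Gaussian increments,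
independent increments. -/
def IsBrownianMotion {mΩ : MeasurableSpace Ω} (μ : Measure Ω) (B : ℝ → Ω → ℝ) : Prop :=
  (∀ t, Measurable (B t)) ∧
  (∀ᵐ ω ∂μ, B 0 ω = 0 ∧ Continuous fun t => B t ω) ∧
  (∀ s t : ℝ, 0 ≤ s → s ≤ t →
    Measure.map (fun ω => B t ω - B s ω) μ = gaussianReal 0 ((t - s).toNNReal)) ∧
  (∀ n : ℕ, ∀ t : ℕ → ℝ, 0 ≤ t 0 → Monotone t →
    iIndepFun
      (fun i : Fin n => fun ω => B (t (i + 1)) ω - B (t i) ω) μ)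

/-- `B` is a Brownian motion with respect to the filtration `F`. -/
def IsFBrownianMotion {mΩ : MeasurableSpace Ω} (μ : Measure Ω) (F : Filtration ℝ mΩ)
    (B : ℝ → Ω → ℝ) : Prop :=
  IsBrownianMotion μ B ∧ Adapted F B ∧
  ∀ s t : ℝ, 0 ≤ s → s ≤ t →
    Indep (MeasurableSpace.comap (fun ω => B t ω - B s ω) inferInstance) (F s) μ

/-- `I` is (a version of) the stochastic integral `∫ H dY`, characterised as the limit in
probability of left-point Riemann sums along dyadic partitions. -/
def IsStochIntegral {mΩ : MeasurableSpace Ω} (μ : Measure Ω) (H Y I : ℝ → Ω → ℝ) : Prop :=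
  (∀ ω, I 0 ω = 0) ∧
  ∀ t : ℝ, 0 ≤ t → TendstoInMeasure μ
    (fun n : ℕ => fun ω => ∑ i ∈ Finset.range (2 ^ n),
      H (t * i / 2 ^ n) ω * (Y (t * (i + 1) / 2 ^ n) ω - Y (t * i / 2 ^ n) ω))
    atTop (I t)

/-- The (Stieltjes) measure of the function `R` is carried by the set `Z`:
`R` is locally constant away from `Z` (on the positive half-line). -/
def CarriedBy (R : ℝ → ℝ) (Z : Set ℝ) : Prop :=
  ∀ s : ℝ, 0 ≤ s → s ∉ Z → ∃ ε > 0, ∀ u ∈ Ioo (s - ε) (s + ε), R u = R s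

/-- `L` is (a version of) the symmetric local time at `0` of `X`, characterised by the
symmetric Tanaka formula: `L ω` is a continuous nondecreasing (Stieltjes) function starting
at `0`, carried by the zero set of `X`, and
`|X t| = |X 0| + ∫_0^t sgn(X s) dX s + L t`. -/
def IsSymmLocalTimeAtZero {mΩ : MeasurableSpace Ω} (μ : Measure Ω) (X : ℝ → Ω → ℝ)
    (L : Ω → StieltjesFunction ℝ) : Prop :=
  (∀ᵐ ω ∂μ, (L ω) 0 = 0 ∧ (Continuous fun s => L ω s) ∧
    CarriedBy (fun s => L ω s) {s : ℝ | X s ω = 0}) ∧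
  ∃ I : ℝ → Ω → ℝ, IsStochIntegral μ (fun s ω => sgn (X s ω)) X I ∧
    ∀ t : ℝ, 0 ≤ t → ∀ᵐ ω ∂μ, |X t ω| = |X 0 ω| + I t ω + (L ω) t

/-- `X` is a solution of the inhomogeneous skew Brownian motion equation
`X t = x + B t + ∫_0^t (2 α s - 1) dL⁰_s(X)`, with symmetric local time `L`. -/
def IsISBMSolution {mΩ : MeasurableSpace Ω} (μ : Measure Ω) (α : ℝ → ℝ) (x : ℝ)
    (B X : ℝ → Ω → ℝ) (L : Ω → StieltjesFunction ℝ) : Prop :=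
  (∀ᵐ ω ∂μ, Continuous fun t => X t ω) ∧
  IsSymmLocalTimeAtZero μ X L ∧
  ∀ t : ℝ, 0 ≤ t → ∀ᵐ ω ∂μ,
    X t ω = x + B t ω + ∫ s in Ioc (0:ℝ) t, (2 * α s - 1) ∂(L ω).measure

/-- `M` is a continuous local martingale for the filtration `F`. -/
def IsContLocalMartingale {mΩ : MeasurableSpace Ω} (μ : Measure Ω) (F : Filtration ℝ mΩ)
    (M : ℝ → Ω → ℝ) : Prop :=
  (∀ᵐ ω ∂μ, Continuous fun t => M t ω) ∧
  ∃ τ : ℕ → Ω → ℝ, (∀ n, IsStoppingTime F (fun ω => ((τ n ω : ℝ) : WithTop ℝ))) ∧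
    (∀ᵐ ω ∂μ, Tendsto (fun n => τ n ω) atTop atTop) ∧
    ∀ n, Martingale (fun t ω => M (min t (τ n ω)) ω) F μ

/-- `Y` is a continuous semimartingale: local martingale plus adapted continuous
finite-variation part. -/
def IsContSemimartingale {mΩ : MeasurableSpace Ω} (μ : Measure Ω) (F : Filtration ℝ mΩ)
    (Y : ℝ → Ω → ℝ) : Prop :=
  ∃ M A : ℝ → Ω → ℝ, IsContLocalMartingale μ F M ∧ Adapted F A ∧
    (∀ᵐ ω ∂μ, A 0 ω = 0 ∧ (Continuous fun t => A t ω) ∧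
      ∀ t : ℝ, 0 ≤ t → BoundedVariationOn (fun s => A s ω) (Icc 0 t)) ∧
    ∀ t ω, Y t ω = M t ω + A t ω

/-- The last zero of `Y (· ω)` before time `t` (with `sup ∅ = 0`). -/
def lastZero (Y : ℝ → Ω → ℝ) (t : ℝ) (ω : Ω) : ℝ :=
  sSup ({0} ∪ {s : ℝ | s ∈ Icc 0 t ∧ Y s ω = 0})

/-- `pk` is (a version of) the predictable projection of the bounded progressive
process `k`: it is adapted, left-continuous, and at every deterministic time `t`,
`pk t = E[k t | F_{t⁻}]`. -/
def IsPredictableProjection {mΩ : MeasurableSpace Ω} (μ : Measure Ω) (F : Filtration ℝ mΩ)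
    (k pk : ℝ → Ω → ℝ) : Prop :=
  Adapted F pk ∧
  (∀ᵐ ω ∂μ, ∀ t : ℝ, ContinuousWithinAt (fun s => pk s ω) (Iio t) t) ∧
  ∀ t : ℝ, 0 < t → pk t =ᵐ[μ] μ[k t | ⨆ s ∈ Iio t, F s]

/-- `Q` is the quadratic variation process of `X` (limit in probability of sums of
squared increments along dyadic partitions). -/
def HasQuadraticVariation {mΩ : MeasurableSpace Ω} (μ : Measure Ω) (X Q : ℝ → Ω → ℝ) : Prop :=
  ∀ t : ℝ, 0 ≤ t → TendstoInMeasure μ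
    (fun n : ℕ => fun ω => ∑ i ∈ Finset.range (2 ^ n),
      (X (t * (i + 1) / 2 ^ n) ω - X (t * i / 2 ^ n) ω) ^ 2)
    atTop (Q t)

/-- The intervals `(g n, d n)` form the excursion decomposition of the path `Y (· ω)`
away from `0`. -/
def IsExcursionDecomposition (Y : ℝ → Ω → ℝ) (g d : ℕ → Ω → ℝ) (ω : Ω) : Prop :=
  ({t : ℝ | 0 ≤ t ∧ Y t ω ≠ 0} = ⋃ n, Ioo (g n ω) (d n ω)) ∧
  (∀ n, 0 ≤ g n ω ∧ g n ω < d n ω ∧ Y (g n ω) ω = 0 ∧ Y (d n ω) ω = 0) ∧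
  (Pairwise fun m n => Disjoint (Ioo (g m ω) (d m ω)) (Ioo (g n ω) (d n ω)))

/-- The process obtained by attaching the sign `ξ n` to the excursion interval
`(g n, d n)`. -/
def excursionSign (g d : ℕ → Ω → ℝ) (ξ : ℕ → Ω → ℝ) (t : ℝ) (ω : Ω) : ℝ :=
  ∑' n, Set.indicator (Ioo (g n ω) (d n ω)) (fun _ => ξ n ω) t

/-- Number of upcrossings of the interval `[0, ε]` by the path `Y (· ω)` before time `t`. -/
def upcrossingCount (Y : ℝ → Ω → ℝ) (t ε : ℝ) (ω : Ω) : ℕ :=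
  sSup {n : ℕ | ∃ s u : ℕ → ℝ,
    (∀ i < n, 0 ≤ s i ∧ s i < u i ∧ u i ≤ t ∧ Y (s i) ω = 0 ∧ ε ≤ Y (u i) ω) ∧
    ∀ i j, i < j → j < n → u i < s j}

/-- The transition density `p^α(s,t;x,y)` of the inhomogeneous skew Brownian motion. -/
def pISBM (α : ℝ → ℝ) (s t x y : ℝ) : ℝ :=
  (∫ u in Ioo (0:ℝ) (t - s),
    ((1 + sgn y * (2 * α (s + u) - 1)) / 2) * (|y| / Real.pi) *
      (Real.exp (-(y ^ 2) / (2 * (t - (s + u)))) /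
        (Real.sqrt u * (t - s - u) ^ ((3 : ℝ) / 2))) * Real.exp (-(x ^ 2) / (2 * u))) +
  (1 / Real.sqrt (2 * Real.pi * (t - s))) *
    (Real.exp (-((y - x) ^ 2) / (2 * (t - s))) -
      Real.exp (-((y + x) ^ 2) / (2 * (t - s))) * (if 0 < x * y then 1 else 0))

/-- `X` is a nonnegative (local) submartingale of class `Σ`. -/
def IsClassSigma {mΩ : MeasurableSpace Ω} (μ : Measure Ω) (F : Filtration ℝ mΩ)
    (X : ℝ → Ω → ℝ) : Prop :=
  (∀ t ω, 0 ≤ X t ω) ∧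
  ∃ N A : ℝ → Ω → ℝ, IsContLocalMartingale μ F N ∧
    (∀ t ω, X t ω = N t ω + A t ω) ∧
    (∀ᵐ ω ∂μ, A 0 ω = 0 ∧ (Continuous fun t => A t ω) ∧
      MonotoneOn (fun t => A t ω) (Ici 0) ∧
      CarriedBy (fun s => A s ω) {s : ℝ | X s ω = 0})



section AuxLemmas

open scoped ENNReal NNReal Topology
open Real

/-- A function locally constant on `[a, b)` and continuous is constant on `[a, b]`. -/
lemma const_of_locally_const {Λ : ℝ → ℝ} {a b : ℝ} (hΛ : Continuous Λ) (hab : a ≤ b)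
    (H : ∀ s, a ≤ s → s < b → ∀ᶠ u in nhds s, Λ u = Λ s) : Λ b = Λ a := by
  rcases eq_or_lt_of_le hab with rfl | hlt
  · rfl
  have key : ∀ c, a ≤ c → c < b → Λ c = Λ a := by
    intro c hac hcb
    haveI : PreconnectedSpace (Icc a c) := Subtype.preconnectedSpace isPreconnected_Icc
    have hlc : IsLocallyConstant (fun y : Icc a c => Λ y.1) := by
      rw [IsLocallyConstant.iff_eventually_eq]
      intro x
      have hx : ∀ᶠ u in nhds x.1, Λ u = Λ x.1 :=
        H x.1 x.2.1 (lt_of_le_of_lt x.2.2 hcb)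
      exact (continuous_subtype_val.tendsto x).eventually hx
    exact hlc.apply_eq_of_preconnectedSpace ⟨c, hac, le_refl c⟩ ⟨a, le_refl a, hac⟩
  have h1 : Tendsto Λ (nhdsWithin b (Iio b)) (nhds (Λ b)) :=
    (hΛ.tendsto b).mono_left nhdsWithin_le_nhds
  have h2 : Tendsto Λ (nhdsWithin b (Iio b)) (nhds (Λ a)) := by
    have hev : ∀ᶠ u in nhdsWithin b (Iio b), Λ u = Λ a := by
      filter_upwards [Ioo_mem_nhdsLT_of_mem (⟨hlt, le_refl b⟩ : b ∈ Ioc a b)] with u hu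
      exact key u hu.1.le hu.2
    exact Tendsto.congr' (hev.mono fun u hu => hu.symm) tendsto_const_nhds
  exact tendsto_nhds_unique h1 h2

lemma const_of_locally_const' {Λ : ℝ → ℝ} {a b : ℝ} (hΛ : Continuous Λ) (hab : a ≤ b)
    (H : ∀ s, a < s → s ≤ b → ∀ᶠ u in nhds s, Λ u = Λ s) : Λ b = Λ a := by
  have := const_of_locally_const (Λ := fun u => Λ (-u)) (a := -b) (b := -a)
    (hΛ.comp continuous_neg) (by linarith) ?_
  · simpa using this.symm
  · intro s hs1 hs2
    have hx : ∀ᶠ u in nhds (-s), Λ u = Λ (-s) := H (-s) (by linarith) (by linarith)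
    exact (continuous_neg.tendsto s).eventually hx

/-- Between the first and last zeros, the finite variation part of the ISBM moves
only through values of `f` at zeros. -/
lemma exists_reflect {f Λ ξ : ℝ → ℝ} {x t v : ℝ} (htv : t ≤ v)
    (hξ : Continuous ξ) (hΛ : Continuous Λ)
    (heq : ∀ s ∈ Icc t v, ξ s = x + f s + Λ s)
    (hcarr : ∀ s ∈ Icc t v, ξ s ≠ 0 → ∀ᶠ u in nhds s, Λ u = Λ s) :
    ∃ τ ∈ Icc t v, ∃ g ∈ Icc t v, Λ v - Λ t = f τ - f g := by
  set Z := Icc t v ∩ {s | ξ s = 0} with hZdef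
  have hZc : IsCompact Z := isCompact_Icc.inter_right (isClosed_singleton.preimage hξ)
  by_cases hZ : Z.Nonempty
  · have htau : sInf Z ∈ Z := hZc.sInf_mem hZ
    have hg : sSup Z ∈ Z := hZc.sSup_mem hZ
    refine ⟨sInf Z, htau.1, sSup Z, hg.1, ?_⟩
    have h1 : Λ (sInf Z) = Λ t := by
      refine const_of_locally_const hΛ htau.1.1 fun s hs hslt => ?_
      refine hcarr s ⟨hs, hslt.le.trans htau.1.2⟩ fun h0 => ?_
      exact absurd (csInf_le hZc.bddBelow ⟨⟨hs, hslt.le.trans htau.1.2⟩, h0⟩) (not_le.2 hslt)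
    have h2 : Λ v = Λ (sSup Z) := by
      refine const_of_locally_const' hΛ hg.1.2 fun s hs hslt => ?_
      refine hcarr s ⟨hg.1.1.trans hs.le, hslt⟩ fun h0 => ?_
      exact absurd (le_csSup hZc.bddAbove ⟨⟨hg.1.1.trans hs.le, hslt⟩, h0⟩) (not_le.2 hs)
    have e1 : ξ (sInf Z) = 0 := htau.2
    have e2 : ξ (sSup Z) = 0 := hg.2
    have q1 := heq _ htau.1
    have q2 := heq _ hg.1
    rw [e1] at q1; rw [e2] at q2
    rw [h2, ← h1]; linarith
  · refine ⟨t, ⟨le_refl t, htv⟩, t, ⟨le_refl t, htv⟩, ?_⟩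
    have : Λ v = Λ t := by
      refine const_of_locally_const hΛ htv fun s hs hsv => ?_
      refine hcarr s ⟨hs, hsv.le⟩ fun h0 => hZ ⟨s, ⟨hs, hsv.le⟩, h0⟩
    rw [this]; ring

lemma ennnorm_ofReal_abs (x : ℝ) : (‖x‖₊ : ℝ≥0∞) = ENNReal.ofReal |x| := by
  rw [← enorm_eq_nnnorm, Real.enorm_eq_ofReal_abs]

/-- The fourth moment of the standard gaussian, as an extended real. -/
def gmc : ℝ≥0∞ := ∫⁻ x : ℝ, (‖x‖₊ : ℝ≥0∞) ^ 4 ∂(gaussianReal 0 1)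

lemma meas_pow4 : Measurable fun x : ℝ => (‖x‖₊ : ℝ≥0∞) ^ 4 :=
  (measurable_nnnorm.comp measurable_id).coe_nnreal_ennreal.pow_const 4

lemma gmc_lt_top : gmc < ⊤ := by
  have hint : Integrable (fun x : ℝ => gaussianPDFReal 0 1 x * |x| ^ 4) := by
    have h0 : Integrable (fun x : ℝ => x ^ ((4:ℕ):ℝ) * rexp (-(1/2) * x ^ 2)) :=
      integrable_rpow_mul_exp_neg_mul_sq (by norm_num) (by norm_num)
    have h1 : Integrable (fun x : ℝ => x ^ (4:ℕ) * rexp (-(1/2) * x ^ 2)) := by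
      simpa only [Real.rpow_natCast] using h0
    have h2 := h1.const_mul (√(2 * Real.pi * ((1:ℝ≥0):ℝ)))⁻¹
    refine h2.congr ?_
    filter_upwards with x
    rw [gaussianPDFReal]
    have e1 : -(x - 0) ^ 2 / (2 * ((1:ℝ≥0):ℝ)) = -(1/2) * x ^ 2 := by push_cast; ring
    rw [e1]
    have e2 : |x| ^ 4 = x ^ 4 := by
      rw [← abs_pow, abs_of_nonneg (by positivity)]
    rw [e2]; ring
  have key : gmc = ∫⁻ x : ℝ, ENNReal.ofReal (gaussianPDFReal 0 1 x * |x| ^ 4) := by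
    unfold gmc
    rw [gaussianReal_of_var_ne_zero _ one_ne_zero,
      lintegral_withDensity_eq_lintegral_mul _ (measurable_gaussianPDF _ _) meas_pow4]
    congr 1
    funext x
    simp only [Pi.mul_apply, gaussianPDF]
    rw [ENNReal.ofReal_mul (gaussianPDFReal_nonneg _ _ _)]
    congr 1
    rw [ennnorm_ofReal_abs, ← ENNReal.ofReal_pow (abs_nonneg x)]
  rw [key]
  calc ∫⁻ x : ℝ, ENNReal.ofReal (gaussianPDFReal 0 1 x * |x| ^ 4)
      ≤ ∫⁻ x : ℝ, (‖gaussianPDFReal 0 1 x * |x| ^ 4‖₊ : ℝ≥0∞) := by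
        refine lintegral_mono fun x => ?_
        rw [ennnorm_ofReal_abs]
        exact ENNReal.ofReal_le_ofReal (le_abs_self _)
    _ < ⊤ := hint.hasFiniteIntegral

lemma lintegral_pow4_gaussian (v : ℝ≥0) :
    ∫⁻ x : ℝ, (‖x‖₊ : ℝ≥0∞) ^ 4 ∂(gaussianReal 0 v) = (v : ℝ≥0∞) ^ 2 * gmc := by
  have hmap := gaussianReal_map_const_mul (μ := 0) (v := 1) (√v)
  have hv : (NNReal.mk ((√v)^2) (sq_nonneg _)) * 1 = v := by
    ext; simp [Real.sq_sqrt v.coe_nonneg]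
  rw [hv, mul_zero] at hmap
  rw [← hmap, lintegral_map meas_pow4 (measurable_const_mul _)]
  have hpt : ∀ x : ℝ, (‖√v * x‖₊ : ℝ≥0∞) ^ 4 = (v : ℝ≥0∞) ^ 2 * (‖x‖₊ : ℝ≥0∞) ^ 4 := by
    intro x
    rw [nnnorm_mul, ENNReal.coe_mul, mul_pow]
    congr 1
    rw [ennnorm_ofReal_abs, abs_of_nonneg (Real.sqrt_nonneg _),
      ← ENNReal.ofReal_pow (Real.sqrt_nonneg _)]
    have e : (√v) ^ 4 = ((v:ℝ)) ^ 2 := by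
      rw [show (4:ℕ) = 2 * 2 from rfl, pow_mul, Real.sq_sqrt v.coe_nonneg]
    rw [e, ENNReal.ofReal_pow v.coe_nonneg, ENNReal.ofReal_coe_nnreal]
  simp_rw [hpt]
  rw [lintegral_const_mul _ meas_pow4]
  rfl

/-- The geometric ratio `2 ^ (-1/4)`. -/
def rhoE : ℝ≥0∞ := (2:ℝ≥0∞)⁻¹ ^ ((4:ℝ))⁻¹

lemma rhoE_lt_one : rhoE < 1 := by
  refine ENNReal.rpow_lt_one ?_ (by norm_num)
  rw [ENNReal.inv_lt_one]
  exact ENNReal.one_lt_two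

/-- Geometric series constant. -/
def kapE : ℝ≥0∞ := (1 - rhoE)⁻¹

lemma kapE_ne_top : kapE ≠ ⊤ :=
  ENNReal.inv_ne_top.2 (tsub_pos_of_lt rhoE_lt_one).ne'

lemma geom_le (n : ℕ) : ∑ m ∈ Finset.range n, rhoE ^ m ≤ kapE :=
  (ENNReal.sum_le_tsum _).trans_eq (ENNReal.tsum_geometric _)

end AuxLemmas

open scoped ENNReal NNReal Topology
open Real

/-- uniform Kolmogorov estimate: there is a universal constant `C > 0`
such that for every Borel `α` with values in `[0,1]`, every starting point `x`, and
every solution `X` of the ISBM equation, `E|X_{t+ε} − X_t|⁴ ≤ C ε²` for all `t, ε ≥ 0`. -/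
theorem isbm_kolmogorov_estimate :
    ∃ C : ℝ, 0 < C ∧
      ∀ (Ω : Type) (mΩ : MeasurableSpace Ω) (μ : Measure Ω), IsProbabilityMeasure μ →
        ∀ (α : ℝ → ℝ), Measurable α → (∀ s, α s ∈ Icc (0:ℝ) 1) →
        ∀ (x : ℝ) (B X : ℝ → Ω → ℝ) (L : Ω → StieltjesFunction ℝ),
          IsBrownianMotion μ B → (∀ t, Measurable (X t)) →
          IsISBMSolution μ α x B X L →
          ∀ t ε : ℝ, 0 ≤ t → 0 ≤ ε →
            ∫ ω, |X (t + ε) ω - X t ω| ^ 4 ∂μ ≤ C * ε ^ 2 := by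
  classical
  refine ⟨81 * kapE.toReal ^ 4 * gmc.toReal + 1, by positivity, ?_⟩
  intro Ω mΩ μ hμ α hαm hα01 x B X L hB hXm hsol t ε ht hε
  rcases eq_or_lt_of_le hε with rfl | hε'
  · simp
  set v := t + ε with hv
  have htv : t ≤ v := by simp [hv]; linarith
  have hv0 : 0 ≤ v := ht.trans htv
  -- dyadic points
  set pt : ℕ → ℕ → ℝ := fun m k => t + k * ε / 2 ^ m with hptdef
  have hpt0 : ∀ m, pt m 0 = t := by intro m; simp [hptdef]
  have hptnn : ∀ m k, 0 ≤ pt m k := by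
    intro m k
    have : (0:ℝ) ≤ (k:ℝ) * ε / 2 ^ m := by positivity
    simp only [hptdef]; linarith
  have hptle : ∀ m k, pt m k ≤ pt m (k + 1) := by
    intro m k
    simp only [hptdef]
    have h2 : (0:ℝ) < 2 ^ m := by positivity
    rw [add_le_add_iff_left, div_le_div_iff_of_pos_right h2]
    push_cast
    nlinarith [hε'.le]
  have hptdiff : ∀ m k, pt m (k + 1) - pt m k = ε / 2 ^ m := by
    intro m k
    simp only [hptdef]
    push_cast
    ring
  -- level-m control variables
  set M : ℕ → Ω → ℝ := fun m ω =>
    (∑ k ∈ Finset.range (2 ^ m), (B (pt m (k + 1)) ω - B (pt m k) ω) ^ 4) ^ ((4:ℝ))⁻¹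
    with hMdef
  have hMnn : ∀ m ω, 0 ≤ M m ω := by
    intro m ω
    apply Real.rpow_nonneg
    exact Finset.sum_nonneg fun k _ => by positivity
  have hMmeas : ∀ m, Measurable (M m) := by
    intro m
    apply Measurable.pow _ measurable_const
    exact Finset.measurable_sum _ fun k _ => ((hB.1 _).sub (hB.1 _)).pow_const 4
  -- gaussian increment moments
  have hmom : ∀ s u : ℝ, 0 ≤ s → s ≤ u →
      ∫⁻ ω, (‖B u ω - B s ω‖₊ : ℝ≥0∞) ^ 4 ∂μ = ENNReal.ofReal (u - s) ^ 2 * gmc := by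
    intro s u hs hsu
    have hmap := hB.2.2.1 s u hs hsu
    have hg : ENNReal.ofReal (u - s) ^ 2 * gmc
        = ∫⁻ z : ℝ, (‖z‖₊ : ℝ≥0∞) ^ 4 ∂(gaussianReal 0 ((u - s).toNNReal)) := by
      rw [lintegral_pow4_gaussian]
      rfl
    rw [hg, ← hmap, lintegral_map (g := fun ω => B u ω - B s ω) meas_pow4 ((hB.1 u).sub (hB.1 s))]
  have hMmom : ∀ m, ∫⁻ ω, (‖M m ω‖₊ : ℝ≥0∞) ^ 4 ∂μ
      = ENNReal.ofReal (ε ^ 2) * gmc * (2:ℝ≥0∞)⁻¹ ^ m := by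
    intro m
    have hT : ∀ ω, (‖M m ω‖₊ : ℝ≥0∞) ^ 4
        = ∑ k ∈ Finset.range (2 ^ m),
          (‖B (pt m (k + 1)) ω - B (pt m k) ω‖₊ : ℝ≥0∞) ^ 4 := by
      intro ω
      have hTnn : 0 ≤ ∑ k ∈ Finset.range (2 ^ m), (B (pt m (k + 1)) ω - B (pt m k) ω) ^ 4 :=
        Finset.sum_nonneg fun k _ => by positivity
      rw [ennnorm_ofReal_abs, abs_of_nonneg (hMnn m ω), ← ENNReal.ofReal_pow (hMnn m ω)]
      have hMpow : M m ω ^ (4:ℕ)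
          = ∑ k ∈ Finset.range (2 ^ m), (B (pt m (k + 1)) ω - B (pt m k) ω) ^ 4 := by
        rw [hMdef]
        simp only
        rw [← Real.rpow_natCast (_ ^ ((4:ℝ))⁻¹) 4, ← Real.rpow_mul hTnn]
        norm_num
      rw [hMpow, ENNReal.ofReal_sum_of_nonneg (fun k _ => by positivity)]
      refine Finset.sum_congr rfl fun k _ => ?_
      rw [ennnorm_ofReal_abs, ← ENNReal.ofReal_pow (abs_nonneg _)]
      congr 1
      rw [← abs_pow, abs_of_nonneg (by positivity)]
    simp_rw [hT]
    rw [lintegral_finset_sum _ (f := fun k ω => (‖B (pt m (k + 1)) ω - B (pt m k) ω‖₊ : ℝ≥0∞) ^ 4)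
      (fun k _ => ((hB.1 _).sub (hB.1 _)).nnnorm.coe_nnreal_ennreal.pow_const 4)]
    have heach : ∀ k ∈ Finset.range (2 ^ m),
        ∫⁻ ω, (‖B (pt m (k + 1)) ω - B (pt m k) ω‖₊ : ℝ≥0∞) ^ 4 ∂μ
          = ENNReal.ofReal (ε / 2 ^ m) ^ 2 * gmc := by
      intro k _
      rw [hmom _ _ (hptnn m k) (hptle m k), hptdiff]
    rw [Finset.sum_congr rfl heach, Finset.sum_const, Finset.card_range, nsmul_eq_mul]
    have hofr : ENNReal.ofReal (ε / 2 ^ m) = ENNReal.ofReal ε * (2:ℝ≥0∞)⁻¹ ^ m := by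
      have h1 : ε / 2 ^ m = ε * ((2:ℝ)⁻¹) ^ m := by
        rw [div_eq_mul_inv, ← inv_pow]
      rw [h1, ENNReal.ofReal_mul hε'.le, ENNReal.ofReal_pow (by norm_num)]
      congr 2
      rw [ENNReal.ofReal_inv_of_pos (by norm_num)]
      norm_num
    rw [hofr]
    have hcast : ((2 ^ m : ℕ) : ℝ≥0∞) = (2:ℝ≥0∞) ^ m := by push_cast; ring
    rw [hcast]
    have hcancel : (2:ℝ≥0∞) ^ m * ((2:ℝ≥0∞)⁻¹) ^ m = 1 := by
      rw [← mul_pow, ENNReal.mul_inv_cancel (by norm_num) (by norm_num), one_pow]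
    have hofr2 : ENNReal.ofReal ε ^ 2 = ENNReal.ofReal (ε ^ 2) := by
      rw [ENNReal.ofReal_pow hε'.le]
    calc (2:ℝ≥0∞) ^ m * ((ENNReal.ofReal ε * (2:ℝ≥0∞)⁻¹ ^ m) ^ 2 * gmc)
        = (ENNReal.ofReal ε ^ 2 * gmc * (2:ℝ≥0∞)⁻¹ ^ m)
            * ((2:ℝ≥0∞) ^ m * ((2:ℝ≥0∞)⁻¹) ^ m) := by ring
      _ = ENNReal.ofReal (ε ^ 2) * gmc * (2:ℝ≥0∞)⁻¹ ^ m := by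
          rw [hcancel, mul_one, hofr2]
  -- chaining bound
  have hsingle : ∀ m k ω, k < 2 ^ m → |B (pt m (k + 1)) ω - B (pt m k) ω| ≤ M m ω := by
    intro m k ω hk
    have habs4 : |B (pt m (k + 1)) ω - B (pt m k) ω|
        = ((B (pt m (k + 1)) ω - B (pt m k) ω) ^ 4) ^ ((4:ℝ))⁻¹ := by
      set a := B (pt m (k + 1)) ω - B (pt m k) ω
      have h1 : a ^ 4 = |a| ^ 4 := by rw [← abs_pow, abs_of_nonneg (by positivity)]
      rw [h1, show ((4:ℝ))⁻¹ = (((4:ℕ):ℝ))⁻¹ by norm_num,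
        Real.pow_rpow_inv_natCast (abs_nonneg a) (by norm_num)]
    rw [habs4, hMdef]
    simp only
    refine Real.rpow_le_rpow (by positivity) ?_ (by norm_num)
    exact Finset.single_le_sum (f := fun i => (B (pt m (i + 1)) ω - B (pt m i) ω) ^ 4)
      (fun i _ => by positivity) (Finset.mem_range.2 hk)
  set Sn : ℕ → Ω → ℝ := fun n ω => ∑ m ∈ Finset.range (n + 1), M m ω with hSdef
  have hSnn : ∀ n ω, 0 ≤ Sn n ω := fun n ω => Finset.sum_nonneg fun m _ => hMnn m ω
  have hSmeas : ∀ n, Measurable (Sn n) := fun n => Finset.measurable_sum _ fun m _ => hMmeas m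
  have hchain : ∀ n k ω, k ≤ 2 ^ n → |B (pt n k) ω - B t ω| ≤ Sn n ω := by
    intro n
    induction n with
    | zero =>
      intro k ω hk
      interval_cases k
      · rw [hpt0]
        simp only [sub_self, abs_zero]
        exact hSnn 0 ω
      · have h := hsingle 0 0 ω (by norm_num)
        rw [hpt0] at h
        have hS0 : Sn 0 ω = M 0 ω := by
          rw [hSdef]; simp [Finset.sum_range_one]
        rw [hS0]
        simpa using h
    | succ n ih =>
      intro k ω hk
      have hsum_succ : Sn (n + 1) ω = Sn n ω + M (n + 1) ω := by
        rw [hSdef]; simp only; rw [Finset.sum_range_succ]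
      set j := k / 2 with hjdef
      have hj2 : j ≤ 2 ^ n := by
        have hpows : 2 ^ (n + 1) = 2 * 2 ^ n := by rw [pow_succ]; ring
        omega
      have hpteq : pt (n + 1) (2 * j) = pt n j := by
        simp only [hptdef]
        push_cast
        rw [pow_succ]
        ring
      have hkcase : k = 2 * j ∨ k = 2 * j + 1 := by omega
      rcases hkcase with hke | hko
      · rw [hke, hpteq]
        refine (ih j ω hj2).trans ?_
        rw [hsum_succ]
        linarith [hMnn (n + 1) ω]
      · have hlt : 2 * j < 2 ^ (n + 1) := by
          have hpows : 2 ^ (n + 1) = 2 * 2 ^ n := by rw [pow_succ]; ring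
          omega
        have htri : |B (pt (n + 1) k) ω - B t ω|
            ≤ |B (pt (n + 1) (2 * j)) ω - B t ω|
              + |B (pt (n + 1) (2 * j + 1)) ω - B (pt (n + 1) (2 * j)) ω| := by
          rw [hko]
          calc |B (pt (n + 1) (2 * j + 1)) ω - B t ω|
              ≤ |B (pt (n + 1) (2 * j + 1)) ω - B (pt (n + 1) (2 * j)) ω|
                + |B (pt (n + 1) (2 * j)) ω - B t ω| := abs_sub_le _ _ _
            _ = _ := by ring
        refine htri.trans ?_
        have hb1 := ih j ω hj2
        have hb2 := hsingle (n + 1) (2 * j) ω hlt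
        rw [hpteq] at hb2
        rw [hsum_succ, hpteq]
        linarith
  have hSmono : ∀ ω, Monotone fun n => (‖Sn n ω‖₊ : ℝ≥0∞) := by
    intro ω i j hij
    simp only
    have h1 : Sn i ω ≤ Sn j ω := by
      apply Finset.sum_le_sum_of_subset_of_nonneg
      · exact Finset.range_subset_range.2 (by omega)
      · exact fun m _ _ => hMnn m ω
    rw [ennnorm_ofReal_abs, ennnorm_ofReal_abs,
      abs_of_nonneg (hSnn i ω), abs_of_nonneg (hSnn j ω)]
    exact ENNReal.ofReal_le_ofReal h1
  -- L⁴ bound on Sn, uniform in n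
  have hSn4 : ∀ n, ∫⁻ ω, (‖Sn n ω‖₊ : ℝ≥0∞) ^ 4 ∂μ ≤ ENNReal.ofReal (ε ^ 2) * gmc * kapE ^ 4 := by
    have hL : ∀ f : Ω → ℝ, Measurable f →
        eLpNorm f 4 μ ^ (4:ℕ) = ∫⁻ ω, (‖f ω‖₊ : ℝ≥0∞) ^ 4 ∂μ := by
      intro f hf
      rw [eLpNorm_eq_lintegral_rpow_enorm_toReal (by norm_num) (by norm_num)]
      simp only [enorm_eq_nnnorm]
      have h1 : ((4:ℝ≥0∞)).toReal = ((4:ℕ):ℝ) := by simp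
      rw [h1]
      simp_rw [ENNReal.rpow_natCast]
      rw [← ENNReal.rpow_natCast ((∫⁻ ω, (‖f ω‖₊ : ℝ≥0∞) ^ (4:ℕ) ∂μ) ^ (1 / ((4:ℕ):ℝ))) 4,
        ← ENNReal.rpow_mul]
      norm_num
    have hMlp : ∀ m, eLpNorm (M m) 4 μ
        ≤ (ENNReal.ofReal (ε ^ 2) * gmc) ^ ((4:ℝ))⁻¹ * rhoE ^ m := by
      intro m
      have h4 : eLpNorm (M m) 4 μ ^ (4:ℕ) = ENNReal.ofReal (ε ^ 2) * gmc * (2:ℝ≥0∞)⁻¹ ^ m := by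
        rw [hL _ (hMmeas m), hMmom m]
      have h5 := congrArg (fun z : ℝ≥0∞ => z ^ ((4:ℝ))⁻¹) h4
      rw [← ENNReal.rpow_natCast (eLpNorm (M m) 4 μ) 4, ← ENNReal.rpow_mul] at h5
      have hexp : ((4:ℕ):ℝ) * ((4:ℝ))⁻¹ = 1 := by norm_num
      rw [hexp, ENNReal.rpow_one] at h5
      rw [h5, ENNReal.mul_rpow_of_nonneg _ _ (by norm_num)]
      refine mul_le_mul' le_rfl (le_of_eq ?_)
      rw [← ENNReal.rpow_natCast ((2:ℝ≥0∞)⁻¹) m, ← ENNReal.rpow_mul,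
        mul_comm ((m:ℕ):ℝ) ((4:ℝ))⁻¹, ENNReal.rpow_mul, ENNReal.rpow_natCast]
      rfl
    intro n
    have hsum : eLpNorm (Sn n) 4 μ ≤ (ENNReal.ofReal (ε ^ 2) * gmc) ^ ((4:ℝ))⁻¹ * kapE := by
      have h1 : eLpNorm (Sn n) 4 μ ≤ ∑ m ∈ Finset.range (n + 1), eLpNorm (M m) 4 μ := by
        have h2 := eLpNorm_sum_le (μ := μ) (p := 4) (f := fun m => M m)
          (s := Finset.range (n + 1)) (fun m _ => (hMmeas m).aestronglyMeasurable) (by norm_num)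
        have h3 : (∑ m ∈ Finset.range (n + 1), fun ω => M m ω) = Sn n := by
          funext ω
          rw [hSdef]
          simp only [Finset.sum_apply]
        rw [← h3]
        exact h2
      refine h1.trans ?_
      calc ∑ m ∈ Finset.range (n + 1), eLpNorm (M m) 4 μ
          ≤ ∑ m ∈ Finset.range (n + 1), (ENNReal.ofReal (ε ^ 2) * gmc) ^ ((4:ℝ))⁻¹ * rhoE ^ m :=
            Finset.sum_le_sum fun m _ => hMlp m
        _ = (ENNReal.ofReal (ε ^ 2) * gmc) ^ ((4:ℝ))⁻¹ * ∑ m ∈ Finset.range (n + 1), rhoE ^ m := by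
            rw [Finset.mul_sum]
        _ ≤ _ := mul_le_mul' le_rfl (geom_le _)
    have hfinal := pow_le_pow_left' hsum 4
    rw [hL _ (hSmeas n)] at hfinal
    refine hfinal.trans ?_
    rw [mul_pow]
    refine mul_le_mul' (le_of_eq ?_) le_rfl
    rw [← ENNReal.rpow_natCast (_ ^ ((4:ℝ))⁻¹) 4, ← ENNReal.rpow_mul]
    norm_num
  -- monotone convergence
  set ψ4 : Ω → ℝ≥0∞ := fun ω => ⨆ n, (‖Sn n ω‖₊ : ℝ≥0∞) ^ 4 with hψdef
  have hMCT : ∫⁻ ω, ψ4 ω ∂μ ≤ ENNReal.ofReal (ε ^ 2) * gmc * kapE ^ 4 := by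
    rw [hψdef, lintegral_iSup (fun n => (hSmeas n).nnnorm.coe_nnreal_ennreal.pow_const 4)
      (fun i j hij ω => pow_le_pow_left' (hSmono ω hij) 4)]
    exact iSup_le hSn4
  -- domination of the continuum supremum by the dyadic one
  have hdom : ∀ ω, Continuous (fun u => B u ω) → ∀ u ∈ Icc t v,
      (‖B u ω - B t ω‖₊ : ℝ≥0∞) ≤ ⨆ n, (‖Sn n ω‖₊ : ℝ≥0∞) := by
    intro ω hBc u hu
    have hut : 0 ≤ u - t := by linarith [hu.1]
    have huv : u - t ≤ ε := by
      have := hu.2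
      simp only [hv] at this
      linarith
    set y : ℕ → ℝ := fun n => (u - t) * 2 ^ n / ε with hy
    have hynn : ∀ n, 0 ≤ y n := fun n => by
      rw [hy]
      positivity
    set kn : ℕ → ℕ := fun n => ⌊y n⌋₊ with hknd
    have hkle : ∀ n, kn n ≤ 2 ^ n := by
      intro n
      have h1 : y n ≤ ((2 ^ n : ℕ) : ℝ) := by
        rw [hy]
        simp only
        rw [div_le_iff₀ hε']
        push_cast
        nlinarith [pow_pos (show (0:ℝ) < 2 by norm_num) n]
      calc kn n ≤ ⌊((2 ^ n : ℕ) : ℝ)⌋₊ := Nat.floor_le_floor h1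
        _ = 2 ^ n := Nat.floor_natCast _
    have happrox : ∀ n, |pt n (kn n) - u| ≤ ε / 2 ^ n := by
      intro n
      have h2 : (0:ℝ) < 2 ^ n := by positivity
      have hfl : (kn n : ℝ) ≤ y n := Nat.floor_le (hynn n)
      have hfu : y n < kn n + 1 := Nat.lt_floor_add_one _
      rw [hy] at hfl hfu
      simp only at hfl hfu
      have h1' : (u - t) * 2 ^ n ≤ ((kn n : ℝ) + 1) * ε := by
        rw [div_lt_iff₀ hε'] at hfu
        exact hfu.le
      have h2' : (kn n : ℝ) * ε ≤ (u - t) * 2 ^ n := by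
        rw [le_div_iff₀ hε'] at hfl
        exact hfl
      simp only [hptdef]
      rw [abs_le]
      have key1 : u - t ≤ ((kn n : ℝ) * ε + ε) / 2 ^ n := by
        rw [le_div_iff₀ h2]
        nlinarith
      have key2 : ((kn n : ℝ) * ε) / 2 ^ n ≤ u - t := by
        rw [div_le_iff₀ h2]
        nlinarith
      have e : ((kn n : ℝ) * ε) / 2 ^ n + ε / 2 ^ n = ((kn n : ℝ) * ε + ε) / 2 ^ n := by
        ring
      constructor
      · linarith
      · linarith
    have hptt : Tendsto (fun n => pt n (kn n)) atTop (𝓝 u) := by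
      rw [tendsto_iff_dist_tendsto_zero]
      have h2 : Tendsto (fun n : ℕ => ε / 2 ^ n) atTop (𝓝 0) := by
        have h3 : Tendsto (fun n : ℕ => ((2:ℝ)⁻¹) ^ n) atTop (𝓝 0) :=
          tendsto_pow_atTop_nhds_zero_of_lt_one (by norm_num) (by norm_num)
        have h4 := h3.const_mul ε
        rw [mul_zero] at h4
        refine h4.congr fun n => ?_
        rw [div_eq_mul_inv, inv_pow]
      exact squeeze_zero (fun n => dist_nonneg)
        (fun n => by rw [Real.dist_eq]; exact happrox n) h2
    have hcoe : Tendsto (fun n => (‖B (pt n (kn n)) ω - B t ω‖₊ : ℝ≥0∞)) atTop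
        (𝓝 ((‖B u ω - B t ω‖₊ : ℝ≥0∞))) := by
      rw [ENNReal.tendsto_coe]
      exact (((hBc.tendsto u).comp hptt).sub tendsto_const_nhds).nnnorm
    refine le_of_tendsto hcoe (Filter.Eventually.of_forall fun n => ?_)
    refine le_trans ?_ (le_iSup (fun n => (‖Sn n ω‖₊ : ℝ≥0∞)) n)
    have hch := hchain n (kn n) ω (hkle n)
    rw [ennnorm_ofReal_abs, ennnorm_ofReal_abs, abs_of_nonneg (hSnn n ω)]
    exact ENNReal.ofReal_le_ofReal hch
  -- the finite variation part
  set Λf : Ω → ℝ → ℝ := fun ω s => ∫ r in Ioc (0:ℝ) s, (2 * α r - 1) ∂(L ω).measure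
    with hΛdef
  have hαbd : ∀ r, ‖2 * α r - 1‖ ≤ 1 := by
    intro r
    obtain ⟨h0, h1⟩ := hα01 r
    rw [Real.norm_eq_abs, abs_le]
    constructor <;> linarith
  have hint : ∀ (ω : Ω) (s u : ℝ), IntegrableOn (fun r => 2 * α r - 1) (Ioc s u)
      (L ω).measure := by
    intro ω s u
    have hfin : (L ω).measure (Ioc s u) < ⊤ := by
      rw [StieltjesFunction.measure_Ioc]
      exact ENNReal.ofReal_lt_top
    haveI : IsFiniteMeasure ((L ω).measure.restrict (Ioc s u)) :=
      ⟨by rwa [Measure.restrict_apply_univ]⟩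
    exact Integrable.mono' (integrable_const 1)
      ((hαm.const_mul 2).sub_const 1).aestronglyMeasurable
      (Filter.Eventually.of_forall fun r => hαbd r)
  have hΛdiffeq : ∀ (ω : Ω) ⦃s u : ℝ⦄, 0 ≤ s → s ≤ u →
      Λf ω u - Λf ω s = ∫ r in Ioc s u, (2 * α r - 1) ∂(L ω).measure := by
    intro ω s u hs hsu
    have hunion : Ioc (0:ℝ) s ∪ Ioc s u = Ioc 0 u := Ioc_union_Ioc_eq_Ioc hs hsu
    rw [hΛdef]
    simp only
    rw [← hunion, setIntegral_union (Set.Ioc_disjoint_Ioc_of_le le_rfl) measurableSet_Ioc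
      (hint ω 0 s) (hint ω s u)]
    ring
  have hΛabs : ∀ (ω : Ω) ⦃s u : ℝ⦄, 0 ≤ s → s ≤ u → |Λf ω u - Λf ω s| ≤ L ω u - L ω s := by
    intro ω s u hs hsu
    rw [hΛdiffeq ω hs hsu]
    have hfin : (L ω).measure (Ioc s u) < ⊤ := by
      rw [StieltjesFunction.measure_Ioc]
      exact ENNReal.ofReal_lt_top
    have hb := norm_setIntegral_le_of_norm_le_const hfin (fun r _ => hαbd r)
    rw [Real.norm_eq_abs] at hb
    refine hb.trans ?_
    rw [one_mul, measureReal_def, StieltjesFunction.measure_Ioc,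
      ENNReal.toReal_ofReal (sub_nonneg.2 ((L ω).mono hsu))]
  have hΛ0 : ∀ (ω : Ω) (s : ℝ), s ≤ 0 → Λf ω s = 0 := by
    intro ω s hs
    rw [hΛdef]
    simp only
    rw [Set.Ioc_eq_empty (not_lt.2 hs), Measure.restrict_empty, integral_zero_measure]
  have hΛmax : ∀ (ω : Ω) (s : ℝ), Λf ω s = Λf ω (max s 0) := by
    intro ω s
    rcases le_total 0 s with h | h
    · rw [max_eq_left h]
    · rw [max_eq_right h, hΛ0 ω s h, hΛ0 ω 0 le_rfl]
  have hΛcont : ∀ ω : Ω, Continuous (fun s => L ω s) → Continuous (Λf ω) := by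
    intro ω hLc
    rw [continuous_iff_continuousAt]
    intro s0
    have hbound : ∀ u, |Λf ω u - Λf ω s0| ≤ |L ω (max u 0) - L ω (max s0 0)| := by
      intro u
      rcases le_total (max s0 0) (max u 0) with h | h
      · rw [hΛmax ω u, hΛmax ω s0]
        exact (hΛabs ω (le_max_right s0 0) h).trans (le_abs_self _)
      · rw [hΛmax ω u, hΛmax ω s0, abs_sub_comm]
        refine (hΛabs ω (le_max_right u 0) h).trans ?_
        rw [abs_sub_comm]
        exact le_abs_self _
    have hg : Tendsto (fun u => |L ω (max u 0) - L ω (max s0 0)|) (nhds s0) (nhds 0) := by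
      have hc : Continuous fun u : ℝ => |L ω (max u 0) - L ω (max s0 0)| :=
        ((hLc.comp (continuous_id.max continuous_const)).sub continuous_const).abs
      have h1 := hc.tendsto s0
      simpa using h1
    rw [ContinuousAt, tendsto_iff_dist_tendsto_zero]
    refine squeeze_zero (fun u => dist_nonneg) (fun u => ?_) hg
    rw [Real.dist_eq]
    exact hbound u
  -- the pathwise estimate
  have hae : ∀ᵐ ω ∂μ, ENNReal.ofReal (|X v ω - X t ω| ^ 4) ≤ 81 * ψ4 ω := by
    have hQ : ∀ᵐ ω ∂μ, ∀ q : ℚ, 0 ≤ q → X (q:ℝ) ω = x + B (q:ℝ) ω + Λf ω (q:ℝ) := by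
      rw [ae_all_iff]
      intro q
      by_cases hq : 0 ≤ q
      · filter_upwards [hsol.2.2 (q:ℝ) (by exact_mod_cast hq)] with ω hω _
        exact hω
      · filter_upwards with ω hq'
        exact absurd hq' (by exact_mod_cast hq)
    filter_upwards [hsol.1, hB.2.1, hsol.2.1.1, hQ] with ω hXc hBc hLp hQω
    obtain ⟨hL0, hLc, hLcarr⟩ := hLp
    have hΛc : Continuous (Λf ω) := hΛcont ω hLc
    -- equation at all nonnegative times
    have heqall : ∀ s : ℝ, 0 ≤ s → X s ω = x + B s ω + Λf ω s := by
      intro s hs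
      have hex : ∀ n : ℕ, ∃ q : ℚ, s < (q:ℝ) ∧ (q:ℝ) < s + 1/((n:ℝ)+1) := by
        intro n
        have hlt : s < s + 1/((n:ℝ)+1) := by
          have : (0:ℝ) < 1/((n:ℝ)+1) := by positivity
          linarith
        obtain ⟨q, h1, h2⟩ := exists_rat_btwn hlt
        exact ⟨q, h1, h2⟩
      choose q hq1 hq2 using hex
      have htq : Tendsto (fun n => ((q n : ℝ))) atTop (nhds s) := by
        have h1 : Tendsto (fun n : ℕ => s + 1/((n:ℝ)+1)) atTop (nhds (s + 0)) :=
          tendsto_const_nhds.add tendsto_one_div_add_atTop_nhds_zero_nat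
        rw [add_zero] at h1
        exact tendsto_of_tendsto_of_tendsto_of_le_of_le tendsto_const_nhds h1
          (fun n => (hq1 n).le) (fun n => (hq2 n).le)
      have hXt : Tendsto (fun n => X ((q n : ℝ)) ω) atTop (nhds (X s ω)) :=
        (hXc.tendsto s).comp htq
      have hRt : Tendsto (fun n => x + B ((q n : ℝ)) ω + Λf ω ((q n : ℝ))) atTop
          (nhds (x + B s ω + Λf ω s)) :=
        (tendsto_const_nhds.add ((hBc.2.tendsto s).comp htq)).add ((hΛc.tendsto s).comp htq)
      refine tendsto_nhds_unique ?_ hRt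
      refine hXt.congr fun n => ?_
      refine hQω (q n) ?_
      have := hs.trans (hq1 n).le
      exact_mod_cast this
    -- the measure dΛf is carried by the zero set of X
    have hcarrΛ : ∀ s ∈ Icc t v, X s ω ≠ 0 → ∀ᶠ u in nhds s, Λf ω u = Λf ω s := by
      intro s hs hne
      have hs0 : 0 ≤ s := ht.trans hs.1
      obtain ⟨δ, hδ, hconst⟩ := hLcarr s hs0 hne
      have hmem : Ioo (s - δ) (s + δ) ∈ nhds s := Ioo_mem_nhds (by linarith) (by linarith)
      filter_upwards [hmem] with u hu
      have key : ∀ a b : ℝ, 0 ≤ a → a ≤ b → a ∈ Ioo (s - δ) (s + δ) →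
          b ∈ Ioo (s - δ) (s + δ) → Λf ω b = Λf ω a := by
        intro a b ha hab hai hbi
        have hmz : (L ω).measure (Ioc a b) = 0 := by
          have hcb := hconst b hbi
          have hca := hconst a hai
          simp only at hcb hca
          rw [StieltjesFunction.measure_Ioc, hcb, hca, sub_self, ENNReal.ofReal_zero]
        have hz : ∫ r in Ioc a b, (2 * α r - 1) ∂(L ω).measure = 0 :=
          setIntegral_measure_zero _ hmz
        have hd := hΛdiffeq ω ha hab
        rw [hz] at hd
        linarith
      have hsmem : s ∈ Ioo (s - δ) (s + δ) := ⟨by linarith, by linarith⟩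
      have hu'mem : max u 0 ∈ Ioo (s - δ) (s + δ) := by
        rcases le_total 0 u with h | h
        · rwa [max_eq_left h]
        · rw [max_eq_right h]
          exact ⟨by linarith [hu.1], by linarith⟩
      rw [hΛmax ω u]
      rcases le_total s (max u 0) with h | h
      · exact key s (max u 0) hs0 h hsmem hu'mem
      · exact (key (max u 0) s (le_max_right u 0) h hu'mem hsmem).symm
    -- reflection through zeros
    obtain ⟨τ, hτ, g, hgI, hrefl⟩ := exists_reflect (f := fun r => B r ω) (Λ := Λf ω)
      (ξ := fun r => X r ω) (x := x) htv hXc hΛc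
      (fun s hs => heqall s (ht.trans hs.1)) hcarrΛ
    have hXd : X v ω - X t ω = (B v ω - B t ω) + (B τ ω - B g ω) := by
      have e1 := heqall v hv0
      have e2 := heqall t ht
      linarith
    have hb1 := hdom ω hBc.2 v ⟨htv, le_refl v⟩
    have hb2 := hdom ω hBc.2 τ hτ
    have hb3 := hdom ω hBc.2 g hgI
    set ψ := ⨆ n, (‖Sn n ω‖₊ : ℝ≥0∞) with hψ
    have habs : |X v ω - X t ω|
        ≤ |B v ω - B t ω| + |B τ ω - B t ω| + |B g ω - B t ω| := by
      rw [hXd]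
      have h1 : B τ ω - B g ω = (B τ ω - B t ω) - (B g ω - B t ω) := by ring
      calc |B v ω - B t ω + (B τ ω - B g ω)|
          ≤ |B v ω - B t ω| + |B τ ω - B g ω| := abs_add_le _ _
        _ ≤ _ := by
            rw [h1]
            have h2 := abs_sub (B τ ω - B t ω) (B g ω - B t ω)
            linarith
    have hXcoe : (‖X v ω - X t ω‖₊ : ℝ≥0∞) ≤ ψ + ψ + ψ := by
      rw [ennnorm_ofReal_abs]
      refine le_trans (ENNReal.ofReal_le_ofReal habs) ?_
      rw [ENNReal.ofReal_add (by positivity) (abs_nonneg _),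
        ENNReal.ofReal_add (abs_nonneg _) (abs_nonneg _)]
      rw [← ennnorm_ofReal_abs, ← ennnorm_ofReal_abs,
        ← ennnorm_ofReal_abs]
      exact add_le_add (add_le_add hb1 hb2) hb3
    have hψpow : ψ ^ 4 = ψ4 ω := by
      have hm := hSmono ω
      have ht1 : Tendsto (fun n => (‖Sn n ω‖₊ : ℝ≥0∞)) atTop (nhds ψ) := tendsto_atTop_iSup hm
      have ht2 : Tendsto (fun n => (‖Sn n ω‖₊ : ℝ≥0∞) ^ 4) atTop (nhds (ψ ^ 4)) := ENNReal.Tendsto.pow ht1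
      exact tendsto_nhds_unique ht2
        (tendsto_atTop_iSup fun i j hij => pow_le_pow_left' (hm hij) 4)
    have hconv : ENNReal.ofReal (|X v ω - X t ω| ^ 4) = (‖X v ω - X t ω‖₊ : ℝ≥0∞) ^ 4 := by
      rw [ennnorm_ofReal_abs, ← ENNReal.ofReal_pow (abs_nonneg _)]
    rw [hconv, ← hψpow]
    calc (‖X v ω - X t ω‖₊ : ℝ≥0∞) ^ 4 ≤ (ψ + ψ + ψ) ^ 4 := pow_le_pow_left' hXcoe 4
      _ = 81 * ψ ^ 4 := by ring
  -- conclusion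
  have hlint : ∫⁻ ω, ENNReal.ofReal (|X v ω - X t ω| ^ 4) ∂μ
      ≤ 81 * (ENNReal.ofReal (ε ^ 2) * gmc * kapE ^ 4) := by
    calc ∫⁻ ω, ENNReal.ofReal (|X v ω - X t ω| ^ 4) ∂μ
        ≤ ∫⁻ ω, 81 * ψ4 ω ∂μ := lintegral_mono_ae hae
      _ = 81 * ∫⁻ ω, ψ4 ω ∂μ := lintegral_const_mul 81
          (Measurable.iSup fun n => (hSmeas n).nnnorm.coe_nnreal_ennreal.pow_const 4)
      _ ≤ _ := mul_le_mul_right hMCT _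
  have hmeasX : AEStronglyMeasurable (fun ω => |X v ω - X t ω| ^ 4) μ :=
    ((((hXm v).sub (hXm t)).abs.pow_const 4)).aestronglyMeasurable
  rw [integral_eq_lintegral_of_nonneg_ae (Filter.Eventually.of_forall fun ω => by positivity)
    hmeasX]
  have hne : (81:ℝ≥0∞) * (ENNReal.ofReal (ε ^ 2) * gmc * kapE ^ 4) ≠ ⊤ := by
    refine ENNReal.mul_ne_top (by norm_num) ?_
    exact ENNReal.mul_ne_top (ENNReal.mul_ne_top ENNReal.ofReal_ne_top gmc_lt_top.ne)
      (ENNReal.pow_ne_top kapE_ne_top)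
  calc (∫⁻ ω, ENNReal.ofReal (|X v ω - X t ω| ^ 4) ∂μ).toReal
      ≤ ((81:ℝ≥0∞) * (ENNReal.ofReal (ε ^ 2) * gmc * kapE ^ 4)).toReal :=
        ENNReal.toReal_mono hne hlint
    _ ≤ (81 * kapE.toReal ^ 4 * gmc.toReal + 1) * ε ^ 2 := by
        rw [ENNReal.toReal_mul, ENNReal.toReal_mul, ENNReal.toReal_mul,
          ENNReal.toReal_ofReal (by positivity), ENNReal.toReal_pow]
        have h81 : ((81:ℝ≥0∞)).toReal = 81 := by norm_num
        rw [h81]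
        nlinarith [ENNReal.toReal_nonneg (a := gmc), ENNReal.toReal_nonneg (a := kapE),
          sq_nonneg ε, pow_nonneg (ENNReal.toReal_nonneg (a := kapE)) 4,
          mul_nonneg (pow_nonneg (ENNReal.toReal_nonneg (a := kapE)) 4)
            (ENNReal.toReal_nonneg (a := gmc))]

end ISBM
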